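/- Let 0 < s < 1/2 and let f ∈ L²(ℝ). Then the sum over dyadic N ∈ 2^ℕ of N^{2s} ∫ w(ξ,N)|f̂(ξ)|² dξ is bounded above by a constant (depending only on s) times the square of the inhomogeneous Besov norm ‖f‖²_{B^s_{2,2}} = Σ_M M^{2s} ‖P_M f‖²_{L²} (with P_M the Littlewood–Paley projections onto frequencies |ξ| ≈ M, including M = 1 for |ξ| ≤ 1). -/

import Mathlib

open MeasureTheory

/-- The weight `w(ξ,κ) = 3κ²ξ²/(4(ξ²+κ²)(ξ²+4κ²))`. -/
noncomputable def w (ξ κ : ℝ) : ℝ :=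
  3 * κ ^ 2 * ξ ^ 2 / (4 * (ξ ^ 2 + κ ^ 2) * (ξ ^ 2 + 4 * κ ^ 2))

/-- The `k`-th Littlewood–Paley frequency region: `{|ξ| ≤ 1}` for `k = 0`,
`{2^{k-1} < |ξ| ≤ 2^k}` for `k ≥ 1`. -/
def LPregion (k : ℕ) : Set ℝ :=
  if k = 0 then {ξ : ℝ | |ξ| ≤ 1}
  else {ξ : ℝ | (2 : ℝ) ^ (k - 1) < |ξ| ∧ |ξ| ≤ (2 : ℝ) ^ k}

/-! ### Auxiliary lemmas -/

lemma w_den_pos (ξ κ : ℝ) (hκ : 0 < κ) :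
    0 < 4 * (ξ ^ 2 + κ ^ 2) * (ξ ^ 2 + 4 * κ ^ 2) := by positivity

lemma w_nonneg (ξ κ : ℝ) (hκ : 0 < κ) : 0 ≤ w ξ κ := by
  unfold w; positivity

lemma w_le_one (ξ κ : ℝ) (hκ : 0 < κ) : w ξ κ ≤ 1 := by
  rw [w, div_le_one (w_den_pos ξ κ hκ)]
  nlinarith [sq_nonneg ξ, sq_nonneg κ, sq_nonneg (ξ*κ), sq_nonneg (ξ^2)]

lemma w_continuous (κ : ℝ) (hκ : 0 < κ) : Continuous (fun ξ : ℝ => w ξ κ) := by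
  apply Continuous.div (by continuity) (by continuity)
  intro ξ; exact ne_of_gt (w_den_pos ξ κ hκ)

lemma LP_meas (k : ℕ) : MeasurableSet (LPregion k) := by
  have hm : Measurable (fun ξ : ℝ => |ξ|) := continuous_abs.measurable
  unfold LPregion
  split
  · exact measurableSet_le hm measurable_const
  · exact (measurableSet_lt measurable_const hm).inter (measurableSet_le hm measurable_const)

lemma LP_disj_lt {i j : ℕ} (h : i < j) : Disjoint (LPregion i) (LPregion j) := by
  rw [Set.disjoint_left]
  intro ξ hi hj
  have hj0 : j ≠ 0 := by omega
  have hj' : (2:ℝ) ^ (j-1) < |ξ| := by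
    simpa [LPregion, hj0] using (by simpa [LPregion, hj0] using hj : _ ∧ _).1
  have hi' : |ξ| ≤ (2:ℝ) ^ i := by
    by_cases h0 : i = 0
    · simpa [LPregion, h0] using hi
    · exact (by simpa [LPregion, h0] using hi : _ ∧ _).2
  have : (2:ℝ) ^ i ≤ (2:ℝ) ^ (j-1) := by
    apply pow_le_pow_right₀ (by norm_num) (by omega)
  linarith

lemma LP_disjoint : Pairwise (Function.onFun Disjoint LPregion) := by
  intro i j hij
  rcases lt_or_gt_of_ne hij with h | h
  · exact LP_disj_lt h
  · exact (LP_disj_lt h).symm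

lemma LP_union : (⋃ k, LPregion k) = Set.univ := by
  apply Set.eq_univ_of_forall
  intro ξ
  by_cases h1 : |ξ| ≤ 1
  · exact Set.mem_iUnion.mpr ⟨0, by simp [LPregion, h1]⟩
  · push_neg at h1
    have hP : ∃ k : ℕ, |ξ| ≤ (2:ℝ) ^ k := by
      obtain ⟨n, hn⟩ := pow_unbounded_of_one_lt |ξ| (by norm_num : (1:ℝ) < 2)
      exact ⟨n, hn.le⟩
    classical
    set k := Nat.find hP with hk
    have hk0 : k ≠ 0 := by
      intro h0
      have := Nat.find_spec hP
      rw [← hk, h0] at this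
      simp at this; linarith
    have hup : |ξ| ≤ (2:ℝ) ^ k := Nat.find_spec hP
    have hlow : (2:ℝ) ^ (k-1) < |ξ| := by
      have := Nat.find_min hP (m := k - 1) (by omega)
      push_neg at this; exact this
    exact Set.mem_iUnion.mpr ⟨k, by simp [LPregion, hk0]; exact ⟨hlow, hup⟩⟩

/-- Upper bound for `w` on the `k`-th region. -/
lemma w_upper (k n : ℕ) (ξ : ℝ) (hξ : ξ ∈ LPregion k) :
    w ξ ((2:ℝ)^n) ≤ 3 * (2:ℝ)^(2 * min n k) / (2:ℝ)^(2 * max n k) := by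
  have hκ : (0:ℝ) < 2^n := by positivity
  have hκ2 : ((2:ℝ)^n)^2 = (2:ℝ)^(2*n) := by rw [← pow_mul, Nat.mul_comm]
  have hden := w_den_pos ξ ((2:ℝ)^n) hκ
  rcases Nat.eq_zero_or_pos k with hk0 | hkpos
  · subst hk0
    have hξ1 : ξ^2 ≤ 1 := by
      have : |ξ| ≤ 1 := by simpa [LPregion] using hξ
      nlinarith [abs_nonneg ξ, sq_abs ξ]
    simp only [Nat.min_zero, Nat.max_zero, Nat.mul_zero, pow_zero]
    rw [w, div_le_div_iff₀ hden (by positivity)]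
    rw [← hκ2]
    nlinarith [mul_nonneg (sub_nonneg.mpr hξ1) (sq_nonneg (((2:ℝ)^n)^2)), sq_nonneg (ξ^2),
      mul_nonneg (sq_nonneg ξ) (sq_nonneg ((2:ℝ)^n)), sq_nonneg ((2:ℝ)^n), mul_pos hκ hκ]
  · have hk0 : k ≠ 0 := by omega
    obtain ⟨hlo, hhi⟩ : (2:ℝ)^(k-1) < |ξ| ∧ |ξ| ≤ (2:ℝ)^k := by simpa [LPregion, hk0] using hξ
    have hξlo : (2:ℝ)^(2*k) / 4 ≤ ξ^2 := by
      have h1 : ((2:ℝ)^(k-1))^2 ≤ ξ^2 := by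
        nlinarith [abs_nonneg ξ, sq_abs ξ, pow_pos (show (0:ℝ)<2 by norm_num) (k-1)]
      have h2 : ((2:ℝ)^(k-1))^2 = (2:ℝ)^(2*k) / 4 := by
        rw [← pow_mul]
        have : 2 * k = (k-1) * 2 + 2 := by omega
        rw [this, pow_add]; ring
      linarith
    have hξhi : ξ^2 ≤ (2:ℝ)^(2*k) := by
      have h1 : ξ^2 ≤ ((2:ℝ)^k)^2 := by
        nlinarith [abs_nonneg ξ, sq_abs ξ]
      rw [← pow_mul, Nat.mul_comm] at h1; exact h1
    rcases le_or_gt n k with hnk | hnk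
    · rw [min_eq_left hnk, max_eq_right hnk, w, div_le_div_iff₀ hden (by positivity)]
      have e1 : (2:ℝ)^(2*k) = (2:ℝ)^(2*n) * 2^(2*(k-n)) := by
        rw [← pow_add]; congr 1; omega
      rw [← hκ2] at e1 ⊢
      have h4 : (2:ℝ)^(2*k) ≤ 4*ξ^2 := by linarith
      nlinarith [mul_nonneg (mul_pos hκ hκ).le (mul_nonneg (sq_nonneg ξ) (sub_nonneg.mpr h4)),
        mul_nonneg (mul_pos hκ hκ).le (mul_nonneg (mul_pos hκ hκ).le (sq_nonneg ξ)),
        mul_nonneg (mul_pos hκ hκ).le (mul_nonneg (mul_pos hκ hκ).le (mul_pos hκ hκ).le)]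
    · rw [min_eq_right hnk.le, max_eq_left hnk.le, w, div_le_div_iff₀ hden (by positivity)]
      have e1 : (2:ℝ)^(2*n) = (2:ℝ)^(2*k) * 2^(2*(n-k)) := by
        rw [← pow_add]; congr 1; omega
      rw [← hκ2] at e1 ⊢
      have h2k : (0:ℝ) < (2:ℝ)^(2*k) := by positivity
      nlinarith [mul_nonneg (sub_nonneg.mpr hξhi) (sq_nonneg (((2:ℝ)^n)^2)),
        mul_nonneg h2k.le (mul_nonneg (sq_nonneg ξ) (sq_nonneg ((2:ℝ)^n))),
        mul_nonneg h2k.le (sq_nonneg (ξ^2)),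
        mul_nonneg h2k.le (sq_nonneg (((2:ℝ)^n)^2))]

/-- Lower bound for `w(·, 2^k)` on the `k`-th region, `k ≥ 1`. -/
lemma w_lower (k : ℕ) (hk : k ≠ 0) (ξ : ℝ) (hξ : ξ ∈ LPregion k) :
    (3/160 : ℝ) ≤ w ξ ((2:ℝ)^k) := by
  have hκ : (0:ℝ) < 2^k := by positivity
  obtain ⟨hlo, hhi⟩ : (2:ℝ)^(k-1) < |ξ| ∧ |ξ| ≤ (2:ℝ)^k := by simpa [LPregion, hk] using hξ
  have hden := w_den_pos ξ ((2:ℝ)^k) hκ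
  have hξlo : ((2:ℝ)^k)^2 / 4 ≤ ξ^2 := by
    have h1 : ((2:ℝ)^(k-1))^2 ≤ ξ^2 := by
      nlinarith [abs_nonneg ξ, sq_abs ξ, pow_pos (show (0:ℝ)<2 by norm_num) (k-1)]
    have h2 : ((2:ℝ)^(k-1))^2 = ((2:ℝ)^k)^2 / 4 := by
      rw [← pow_mul, ← pow_mul]
      have : k * 2 = (k-1) * 2 + 2 := by omega
      rw [this, pow_add]; ring
    linarith
  have hξhi : ξ^2 ≤ ((2:ℝ)^k)^2 := by
    nlinarith [abs_nonneg ξ, sq_abs ξ]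
  rw [w, le_div_iff₀ hden]
  nlinarith [mul_pos hκ hκ, sq_nonneg ξ]

/-- The geometric-type weight `u k n = (1/2)^{|n-k|}`. -/
noncomputable def u (k n : ℕ) : ℝ :=
  if n ≤ k then (2:ℝ)⁻¹ ^ (k - n) else (2:ℝ)⁻¹ ^ (n - k)

lemma u_nonneg (k n : ℕ) : 0 ≤ u k n := by
  unfold u; split <;> positivity

lemma u_summable (k : ℕ) : Summable (u k) := by
  rw [← summable_nat_add_iff (k+1)]
  have he : (fun n => u k (n + (k+1))) = fun n => (2:ℝ)⁻¹ ^ (n+1) := by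
    funext n
    simp only [u, show ¬ (n + (k+1) ≤ k) by omega, if_false,
      show n + (k+1) - k = n + 1 by omega]
  rw [he]
  have : Summable (fun n : ℕ => (2:ℝ)⁻¹ ^ n) :=
    summable_geometric_of_lt_one (by norm_num) (by norm_num)
  simpa [pow_succ] using this.mul_right (2:ℝ)⁻¹

lemma u_tsum_le (k : ℕ) : ∑' n, u k n ≤ 4 := by
  have hsum := Summable.sum_add_tsum_nat_add (f := u k) (k+1) (u_summable k)
  rw [← hsum]
  have hgeo : Summable (fun n : ℕ => (2:ℝ)⁻¹ ^ n) :=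
    summable_geometric_of_lt_one (by norm_num) (by norm_num)
  have hgeotsum : ∑' n : ℕ, (2:ℝ)⁻¹ ^ n = 2 := by
    rw [tsum_geometric_of_lt_one (by norm_num) (by norm_num)]; norm_num
  have h1 : ∑ i ∈ Finset.range (k+1), u k i ≤ 2 := by
    have e : ∑ i ∈ Finset.range (k+1), u k i = ∑ i ∈ Finset.range (k+1), (2:ℝ)⁻¹ ^ i := by
      rw [← Finset.sum_range_reflect]
      apply Finset.sum_congr rfl
      intro i hi
      rw [Finset.mem_range] at hi
      simp only [u, show k + 1 - 1 - i ≤ k by omega, if_true]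
      congr 1; omega
    rw [e]
    exact le_trans (Summable.sum_le_tsum _ (fun i _ => by positivity) hgeo) (le_of_eq hgeotsum)
  have h2 : ∑' n : ℕ, u k (n + (k+1)) ≤ 2 := by
    have he : (fun n => u k (n + (k+1))) = fun n => (2:ℝ)⁻¹ ^ (n+1) := by
      funext n
      simp only [u, show ¬ (n + (k+1) ≤ k) by omega, if_false,
        show n + (k+1) - k = n + 1 by omega]
    rw [he]
    refine le_trans (Summable.tsum_le_tsum (fun n => ?_) ?_ hgeo) (le_of_eq hgeotsum)
    · exact pow_le_pow_of_le_one (by norm_num) (by norm_num) (by omega)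
    · simpa [pow_succ] using hgeo.mul_right (2:ℝ)⁻¹
  linarith

lemma two_rpow_mono {x y : ℝ} (h : x ≤ y) : (2:ℝ)^x ≤ (2:ℝ)^y :=
  Real.rpow_le_rpow_of_exponent_le one_le_two h

lemma npow_eq_rpow (m : ℕ) : (2:ℝ)^m = (2:ℝ)^(m:ℝ) := (Real.rpow_natCast 2 m).symm

lemma invpow_eq_rpow (m : ℕ) : ((2:ℝ)⁻¹)^m = (2:ℝ)^(-(m:ℝ)) := by
  rw [inv_pow, npow_eq_rpow, ← Real.rpow_neg (by norm_num)]

/-- The key per-term bound. -/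
lemma term_le (s : ℝ) (hs : 0 < s) (hs' : s < 1/2) (k n : ℕ) :
    ((2:ℝ)^n)^(2*s) * (3 * (2:ℝ)^(2 * min n k) / (2:ℝ)^(2 * max n k))
      ≤ 3 * ((2:ℝ)^k)^(2*s) * u k n := by
  have h2 : (0:ℝ) < 2 := by norm_num
  have combine : ∀ a b c : ℝ, (2:ℝ)^a * (3 * (2:ℝ)^b / (2:ℝ)^c) = 3 * (2:ℝ)^(a + b - c) := by
    intro a b c
    rw [Real.rpow_sub h2, Real.rpow_add h2]; ring
  have e1 : ((2:ℝ)^n)^(2*s) = (2:ℝ)^((n:ℝ)*(2*s)) := by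
    rw [npow_eq_rpow, ← Real.rpow_mul h2.le]
  have e2 : ((2:ℝ)^k)^(2*s) = (2:ℝ)^((k:ℝ)*(2*s)) := by
    rw [npow_eq_rpow, ← Real.rpow_mul h2.le]
  rcases le_or_gt n k with h | h
  · rw [min_eq_left h, max_eq_right h]
    simp only [u, if_pos h]
    rw [e1, e2, npow_eq_rpow (2*n), npow_eq_rpow (2*k), invpow_eq_rpow, combine,
      mul_assoc, ← Real.rpow_add h2]
    apply mul_le_mul_of_nonneg_left _ (by norm_num)
    apply two_rpow_mono
    have hc : ((k - n : ℕ) : ℝ) = (k:ℝ) - n := by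
      push_cast [Nat.cast_sub h]; ring
    rw [hc]
    push_cast
    nlinarith [sub_nonneg.mpr (show (n:ℝ) ≤ k by exact_mod_cast h)]
  · rw [min_eq_right h.le, max_eq_left h.le]
    simp only [u, if_neg (by omega : ¬ n ≤ k)]
    rw [e1, e2, npow_eq_rpow (2*k), npow_eq_rpow (2*n), invpow_eq_rpow, combine,
      mul_assoc, ← Real.rpow_add h2]
    apply mul_le_mul_of_nonneg_left _ (by norm_num)
    apply two_rpow_mono
    have hc : ((n - k : ℕ) : ℝ) = (n:ℝ) - k := by
      push_cast [Nat.cast_sub h.le]; ring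
    rw [hc]
    push_cast
    nlinarith [sub_nonneg.mpr (show (k:ℝ) ≤ n by exact_mod_cast h.le)]

lemma sum_bound (s : ℝ) (hs : 0 < s) (hs' : s < 1/2) (k : ℕ) (F : Finset ℕ) :
    ∑ n ∈ F, ((2:ℝ)^n)^(2*s) * (3 * (2:ℝ)^(2 * min n k) / (2:ℝ)^(2 * max n k))
      ≤ 12 * ((2:ℝ)^k)^(2*s) := by
  have hpos : (0:ℝ) ≤ ((2:ℝ)^k)^(2*s) := by positivity
  calc ∑ n ∈ F, ((2:ℝ)^n)^(2*s) * (3 * (2:ℝ)^(2 * min n k) / (2:ℝ)^(2 * max n k))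
      ≤ ∑ n ∈ F, 3 * ((2:ℝ)^k)^(2*s) * u k n :=
        Finset.sum_le_sum (fun n _ => term_le s hs hs' k n)
    _ = 3 * ((2:ℝ)^k)^(2*s) * ∑ n ∈ F, u k n := by rw [← Finset.mul_sum]
    _ ≤ 3 * ((2:ℝ)^k)^(2*s) * 4 := by
        apply mul_le_mul_of_nonneg_left _ (by positivity)
        calc ∑ n ∈ F, u k n ≤ ∑' n, u k n :=
              Summable.sum_le_tsum F (fun n _ => u_nonneg k n) (u_summable k)
          _ ≤ 4 := u_tsum_le k
    _ = 12 * ((2:ℝ)^k)^(2*s) := by ring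

/-- For `0 < s < 1/2` and `f ∈ L²(ℝ)` (given via `f̂`), the dyadic sum
`Σ_N N^{2s} ∫ w(ξ,N)|f̂(ξ)|² dξ` is bounded by a constant depending only on `s`
times the Besov norm squared `Σ_M M^{2s} ‖P_M f‖²_{L²}`. -/
theorem stmt4 (s : ℝ) (hs : 0 < s) (hs' : s < 1 / 2) :
    ∃ C > (0 : ℝ), ∀ fhat : ℝ → ℂ,
      Integrable (fun ξ : ℝ => ‖fhat ξ‖ ^ 2) →
      ∑' n : ℕ, ((2 : ℝ) ^ n) ^ (2 * s) * ∫ ξ : ℝ, w ξ ((2 : ℝ) ^ n) * ‖fhat ξ‖ ^ 2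
        ≤ C * ∑' k : ℕ, ((2 : ℝ) ^ k) ^ (2 * s) * ∫ ξ in LPregion k, ‖fhat ξ‖ ^ 2 := by
  refine ⟨12, by norm_num, ?_⟩
  intro fhat hf
  have hs2 : s < 1/2 := hs'
  set g : ℝ → ℝ := fun ξ => ‖fhat ξ‖ ^ 2 with hgdef
  have hg0 : ∀ ξ, 0 ≤ g ξ := fun ξ => by positivity
  have hκ : ∀ n : ℕ, (0:ℝ) < 2^n := fun n => by positivity
  -- integrability of w(·,2^n) * g
  have hwint : ∀ n : ℕ, Integrable (fun ξ => w ξ ((2:ℝ)^n) * g ξ) := by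
    intro n
    refine hf.bdd_mul ((w_continuous _ (hκ n)).aestronglyMeasurable) (c := 1) (Filter.Eventually.of_forall fun ξ => ?_)
    rw [Real.norm_eq_abs, abs_of_nonneg (w_nonneg ξ _ (hκ n))]
    exact w_le_one ξ _ (hκ n)
  set a : ℕ → ℝ := fun n => ((2:ℝ)^n)^(2*s) * ∫ ξ : ℝ, w ξ ((2:ℝ)^n) * g ξ with hadef
  set b : ℕ → ℝ := fun k => ((2:ℝ)^k)^(2*s) * ∫ ξ in LPregion k, g ξ with hbdef
  have ha0 : ∀ n, 0 ≤ a n := by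
    intro n
    apply mul_nonneg (by positivity)
    exact integral_nonneg (fun ξ => mul_nonneg (w_nonneg ξ _ (hκ n)) (hg0 ξ))
  have hb0 : ∀ k, 0 ≤ b k := by
    intro k
    apply mul_nonneg (by positivity)
    exact setIntegral_nonneg (LP_meas k) (fun ξ _ => hg0 ξ)
  have htb0 : 0 ≤ ∑' k, b k := tsum_nonneg hb0
  by_cases hA : Summable a
  swap
  · rw [tsum_eq_zero_of_not_summable hA]
    linarith
  -- Summable b
  have hba : ∀ k : ℕ, b k ≤ (160/3) * a k + (if k = 0 then ∫ ξ : ℝ, g ξ else 0) := by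
    intro k
    by_cases hk : k = 0
    · subst hk
      rw [if_pos rfl]
      have hb00 : b 0 = ∫ ξ in LPregion 0, g ξ := by
        simp [hbdef, Real.one_rpow]
      have h2 : ∫ ξ in LPregion 0, g ξ ≤ ∫ ξ : ℝ, g ξ :=
        setIntegral_le_integral hf (Filter.Eventually.of_forall hg0)
      have h3 : 0 ≤ (160/3 : ℝ) * a 0 := mul_nonneg (by norm_num) (ha0 0)
      linarith
    · simp only [if_neg hk, add_zero]
      have key : (3/160 : ℝ) * ∫ ξ in LPregion k, g ξ ≤ ∫ ξ : ℝ, w ξ ((2:ℝ)^k) * g ξ := by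
        have step1 : ∫ ξ in LPregion k, (3/160 : ℝ) * g ξ ≤ ∫ ξ in LPregion k, w ξ ((2:ℝ)^k) * g ξ := by
          apply setIntegral_mono_on (hf.const_mul _).integrableOn (hwint k).integrableOn (LP_meas k)
          intro ξ hξ
          exact mul_le_mul_of_nonneg_right (w_lower k hk ξ hξ) (hg0 ξ)
        have step2 : ∫ ξ in LPregion k, w ξ ((2:ℝ)^k) * g ξ ≤ ∫ ξ : ℝ, w ξ ((2:ℝ)^k) * g ξ :=
          setIntegral_le_integral (hwint k)
            (Filter.Eventually.of_forall (fun ξ => mul_nonneg (w_nonneg ξ _ (hκ k)) (hg0 ξ)))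
        calc (3/160 : ℝ) * ∫ ξ in LPregion k, g ξ = ∫ ξ in LPregion k, (3/160 : ℝ) * g ξ := by
              rw [integral_const_mul]
          _ ≤ _ := le_trans step1 step2
      have hpow : (0:ℝ) ≤ ((2:ℝ)^k)^(2*s) := by positivity
      have := mul_le_mul_of_nonneg_left key hpow
      simp only [hbdef, hadef]
      nlinarith [this]
  have hSb : Summable b := by
    apply Summable.of_nonneg_of_le hb0 hba
    apply Summable.add (hA.mul_left _)
    apply summable_of_ne_finset_zero (s := {0})
    intro k hk
    simp only [Finset.mem_singleton] at hk
    simp [hk]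
  -- main estimate
  have hIU : ∀ n : ℕ, IntegrableOn (fun ξ => w ξ ((2:ℝ)^n) * g ξ) (⋃ k, LPregion k) := by
    intro n; rw [LP_union]; exact (hwint n).integrableOn
  have hSsplit : ∀ n : ℕ, Summable (fun k => ∫ ξ in LPregion k, w ξ ((2:ℝ)^n) * g ξ) :=
    fun n => (hasSum_integral_iUnion LP_meas LP_disjoint (hIU n)).summable
  refine Summable.tsum_le_of_sum_le hA ?_
  intro F
  have step1 : ∀ n : ℕ, a n = ∑' k, ((2:ℝ)^n)^(2*s) * ∫ ξ in LPregion k, w ξ ((2:ℝ)^n) * g ξ := by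
    intro n
    have e1 : ∫ ξ : ℝ, w ξ ((2:ℝ)^n) * g ξ = ∑' k, ∫ ξ in LPregion k, w ξ ((2:ℝ)^n) * g ξ := by
      rw [← MeasureTheory.integral_iUnion LP_meas LP_disjoint (hIU n)]
      rw [LP_union, setIntegral_univ]
    rw [hadef]
    simp only
    rw [e1, ← tsum_mul_left]
  have inner_le : ∀ k : ℕ, ∑ n ∈ F, ((2:ℝ)^n)^(2*s) * ∫ ξ in LPregion k, w ξ ((2:ℝ)^n) * g ξ
      ≤ 12 * b k := by
    intro k
    have hIk : (0:ℝ) ≤ ∫ ξ in LPregion k, g ξ := setIntegral_nonneg (LP_meas k) (fun ξ _ => hg0 ξ)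
    have step : ∀ n : ℕ, ((2:ℝ)^n)^(2*s) * ∫ ξ in LPregion k, w ξ ((2:ℝ)^n) * g ξ
        ≤ (((2:ℝ)^n)^(2*s) * (3 * (2:ℝ)^(2 * min n k) / (2:ℝ)^(2 * max n k))) * ∫ ξ in LPregion k, g ξ := by
      intro n
      have hW : (0:ℝ) ≤ 3 * (2:ℝ)^(2 * min n k) / (2:ℝ)^(2 * max n k) := by positivity
      have h1 : ∫ ξ in LPregion k, w ξ ((2:ℝ)^n) * g ξ
          ≤ ∫ ξ in LPregion k, (3 * (2:ℝ)^(2 * min n k) / (2:ℝ)^(2 * max n k)) * g ξ := by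
        apply setIntegral_mono_on (hwint n).integrableOn (hf.const_mul _).integrableOn (LP_meas k)
        intro ξ hξ
        exact mul_le_mul_of_nonneg_right (w_upper k n ξ hξ) (hg0 ξ)
      rw [integral_const_mul] at h1
      have := mul_le_mul_of_nonneg_left h1 (show (0:ℝ) ≤ ((2:ℝ)^n)^(2*s) by positivity)
      linarith [this]
    calc ∑ n ∈ F, ((2:ℝ)^n)^(2*s) * ∫ ξ in LPregion k, w ξ ((2:ℝ)^n) * g ξ
        ≤ ∑ n ∈ F, (((2:ℝ)^n)^(2*s) * (3 * (2:ℝ)^(2 * min n k) / (2:ℝ)^(2 * max n k))) * ∫ ξ in LPregion k, g ξ :=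
          Finset.sum_le_sum (fun n _ => step n)
      _ = (∑ n ∈ F, ((2:ℝ)^n)^(2*s) * (3 * (2:ℝ)^(2 * min n k) / (2:ℝ)^(2 * max n k))) * ∫ ξ in LPregion k, g ξ := by
          rw [← Finset.sum_mul]
      _ ≤ (12 * ((2:ℝ)^k)^(2*s)) * ∫ ξ in LPregion k, g ξ :=
          mul_le_mul_of_nonneg_right (sum_bound s hs hs2 k F) hIk
      _ = 12 * b k := by rw [hbdef]; ring
  have inner_nonneg : ∀ k : ℕ, 0 ≤ ∑ n ∈ F, ((2:ℝ)^n)^(2*s) * ∫ ξ in LPregion k, w ξ ((2:ℝ)^n) * g ξ := by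
    intro k
    apply Finset.sum_nonneg
    intro n _
    apply mul_nonneg (by positivity)
    exact setIntegral_nonneg (LP_meas k) (fun ξ _ => mul_nonneg (w_nonneg ξ _ (hκ n)) (hg0 ξ))
  calc ∑ n ∈ F, a n
      = ∑ n ∈ F, ∑' k, ((2:ℝ)^n)^(2*s) * ∫ ξ in LPregion k, w ξ ((2:ℝ)^n) * g ξ :=
        Finset.sum_congr rfl (fun n _ => step1 n)
    _ = ∑' k, ∑ n ∈ F, ((2:ℝ)^n)^(2*s) * ∫ ξ in LPregion k, w ξ ((2:ℝ)^n) * g ξ :=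
        (Summable.tsum_finsetSum (fun n _ => (hSsplit n).mul_left _)).symm
    _ ≤ ∑' k, 12 * b k := by
        refine Summable.tsum_le_tsum inner_le ?_ (hSb.mul_left 12)
        exact Summable.of_nonneg_of_le inner_nonneg inner_le (hSb.mul_left 12)
    _ = 12 * ∑' k, b k := tsum_mul_left
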